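/- Let ν₁ = (4+12n+33n² + √(400+2976n+8640n²+11664n³+6561n⁴))/(16(1+3n+3n²)) and ν₂ = (25+54n+33n² + √(961+5556n+13014n²+14580n³+6561n⁴))/(16(1+3n+3n²)). Then for every positive integer n: ν₁ is the largest eigenvalue of the symmetric real 2×2 matrix [[c₁, √2(ξ₁−ξ₀)], [√2(ξ₁−ξ₀), 2d₁−b₁]] and ν₂ is the largest eigenvalue of the symmetric real 2×2 matrix [[c₂, √2(ξ₂−ξ₀)], [√2(ξ₂−ξ₀), 2d₂−b₂]], and ν₂ > ν₁. -/
import Mathlib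
open Real Matrix

lemma aux_eig (α β δ μ : ℝ) (hβ : β ≠ 0)
    (hμ : μ = (α + δ) / 2 + Real.sqrt (((α - δ) / 2) ^ 2 + β ^ 2)) :
    IsGreatest {μ' : ℝ | ∃ v : Fin 2 → ℝ, v ≠ 0 ∧
        Matrix.mulVec !![α, β; β, δ] v = μ' • v} μ := by
  have hDsq : Real.sqrt (((α - δ) / 2) ^ 2 + β ^ 2) ^ 2 = ((α - δ) / 2) ^ 2 + β ^ 2 :=
    Real.sq_sqrt (by positivity)
  have hDnn : 0 ≤ Real.sqrt (((α - δ) / 2) ^ 2 + β ^ 2) := Real.sqrt_nonneg _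
  have hkey : μ ^ 2 - (α + δ) * μ + α * δ = β ^ 2 := by nlinarith [hDsq, hμ]
  constructor
  · refine ⟨![β, μ - α], ?_, ?_⟩
    · intro h
      have := congrFun h 0
      simp at this
      exact hβ this
    · funext i
      fin_cases i <;>
        simp [Matrix.mulVec, dotProduct, Fin.sum_univ_two] <;> nlinarith [hkey]
  · rintro μ' ⟨v, hv, he⟩
    have e0 := congrFun he 0
    have e1 := congrFun he 1
    simp [Matrix.mulVec, dotProduct, Fin.sum_univ_two] at e0 e1
    have hv0 : v 0 ≠ 0 := by
      intro h0
      have h1 : v 1 = 0 := by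
        have : β * v 1 = 0 := by rw [h0] at e0; linarith [e0]
        exact (mul_eq_zero.mp this).resolve_left hβ
      apply hv
      funext i; fin_cases i <;> simp [h0, h1]
    have hv1 : v 1 ≠ 0 := by
      intro h1
      have h0 : v 0 = 0 := by
        have : β * v 0 = 0 := by rw [h1] at e1; linarith [e1]
        exact (mul_eq_zero.mp this).resolve_left hβ
      apply hv
      funext i; fin_cases i <;> simp [h0, h1]
    have hprod : (μ' - α) * (μ' - δ) = β ^ 2 := by
      have h01 : v 0 * v 1 ≠ 0 := mul_ne_zero hv0 hv1
      have ha : (μ' - α) * v 0 = β * v 1 := by linarith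
      have hb : (μ' - δ) * v 1 = β * v 0 := by linarith
      have : ((μ' - α) * (μ' - δ)) * (v 0 * v 1) = β ^ 2 * (v 0 * v 1) := by
        linear_combination ((μ' - δ) * v 1) * ha + (β * v 1) * hb
      exact mul_right_cancel₀ h01 this
    nlinarith [hDsq, hprod, hμ, hDnn]

set_option maxHeartbeats 1600000 in
/-- `ν₁` and `ν₂` are the largest eigenvalues of the symmetric 2×2 blocks
`[[c₁, √2(ξ₁−ξ₀)], [√2(ξ₁−ξ₀), 2d₁−b₁]]` and `[[c₂, √2(ξ₂−ξ₀)], [√2(ξ₂−ξ₀), 2d₂−b₂]]`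
of the modified curvature operator of `W(n,n+1)`, and `ν₂ > ν₁`. -/
theorem nu_largest_eigenvalues (n : ℕ) (hn : 1 ≤ n)
    (ξ₀ ξ₁ ξ₂ c₁ c₂ d₁ d₂ b₁ b₂ ν₁ ν₂ : ℝ)
    (hξ₀ : ξ₀ = -(9 * (1 + 2 * (n : ℝ))) / (8 * Real.sqrt (3 + 9 * (n : ℝ) + 9 * (n : ℝ) ^ 2)))
    (hξ₁ : ξ₁ = 3 * (1 + 3 * (n : ℝ)) / (8 * Real.sqrt (3 + 9 * (n : ℝ) + 9 * (n : ℝ) ^ 2)))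
    (hξ₂ : ξ₂ = 3 * (2 + 3 * (n : ℝ)) / (8 * Real.sqrt (3 + 9 * (n : ℝ) + 9 * (n : ℝ) ^ 2)))
    (hc₁ : c₁ = 3 * (n : ℝ) ^ 2 / (8 * (1 + 3 * (n : ℝ) + 3 * (n : ℝ) ^ 2)))
    (hc₂ : c₂ = 3 * (1 + (n : ℝ)) ^ 2 / (8 * (1 + 3 * (n : ℝ) + 3 * (n : ℝ) ^ 2)))
    (hd₁ : d₁ = 1 / 8) (hd₂ : d₂ = 1 / 8)
    (hb₁ : b₁ = -(1 + 3 * (n : ℝ) + 12 * (n : ℝ) ^ 2) / (4 * (1 + 3 * (n : ℝ) + 3 * (n : ℝ) ^ 2)))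
    (hb₂ : b₂ =
      -(10 + 21 * (n : ℝ) + 12 * (n : ℝ) ^ 2) / (4 * (1 + 3 * (n : ℝ) + 3 * (n : ℝ) ^ 2)))
    (hν₁ : ν₁ = (4 + 12 * (n : ℝ) + 33 * (n : ℝ) ^ 2 +
        Real.sqrt (400 + 2976 * (n : ℝ) + 8640 * (n : ℝ) ^ 2 + 11664 * (n : ℝ) ^ 3 +
          6561 * (n : ℝ) ^ 4)) / (16 * (1 + 3 * (n : ℝ) + 3 * (n : ℝ) ^ 2)))
    (hν₂ : ν₂ = (25 + 54 * (n : ℝ) + 33 * (n : ℝ) ^ 2 +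
        Real.sqrt (961 + 5556 * (n : ℝ) + 13014 * (n : ℝ) ^ 2 + 14580 * (n : ℝ) ^ 3 +
          6561 * (n : ℝ) ^ 4)) / (16 * (1 + 3 * (n : ℝ) + 3 * (n : ℝ) ^ 2))) :
    IsGreatest {μ : ℝ | ∃ v : Fin 2 → ℝ, v ≠ 0 ∧
        Matrix.mulVec !![c₁, Real.sqrt 2 * (ξ₁ - ξ₀); Real.sqrt 2 * (ξ₁ - ξ₀), 2 * d₁ - b₁] v
          = μ • v} ν₁ ∧
    IsGreatest {μ : ℝ | ∃ v : Fin 2 → ℝ, v ≠ 0 ∧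
        Matrix.mulVec !![c₂, Real.sqrt 2 * (ξ₂ - ξ₀); Real.sqrt 2 * (ξ₂ - ξ₀), 2 * d₂ - b₂] v
          = μ • v} ν₂ ∧
    ν₁ < ν₂ := by
  have hN : (1:ℝ) ≤ (n:ℝ) := by exact_mod_cast hn
  set N := (n : ℝ) with hNdef
  have hQ : (0:ℝ) < 1 + 3*N + 3*N^2 := by nlinarith
  have hS : (0:ℝ) < 3 + 9*N + 9*N^2 := by nlinarith
  have hsS : 0 < Real.sqrt (3 + 9*N + 9*N^2) := Real.sqrt_pos.mpr hS
  have hsS2 : Real.sqrt (3 + 9*N + 9*N^2) ^ 2 = 3 + 9*N + 9*N^2 := Real.sq_sqrt hS.le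
  have hs2 : Real.sqrt 2 ^ 2 = 2 := Real.sq_sqrt (by norm_num)
  have hs2pos : (0:ℝ) < Real.sqrt 2 := Real.sqrt_pos.mpr (by norm_num)
  have hP₁nn : (0:ℝ) ≤ 400 + 2976*N + 8640*N^2 + 11664*N^3 + 6561*N^4 := by positivity
  have hP₂nn : (0:ℝ) ≤ 961 + 5556*N + 13014*N^2 + 14580*N^3 + 6561*N^4 := by positivity
  -- difference of ξ's
  have hdiff₁ : ξ₁ - ξ₀ = (12 + 27*N) / (8 * Real.sqrt (3 + 9*N + 9*N^2)) := by
    rw [hξ₁, hξ₀]; field_simp; ring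
  have hdiff₂ : ξ₂ - ξ₀ = (15 + 27*N) / (8 * Real.sqrt (3 + 9*N + 9*N^2)) := by
    rw [hξ₂, hξ₀]; field_simp; ring
  have hβ₁pos : 0 < Real.sqrt 2 * (ξ₁ - ξ₀) := by
    rw [hdiff₁]; positivity
  have hβ₂pos : 0 < Real.sqrt 2 * (ξ₂ - ξ₀) := by
    rw [hdiff₂]; positivity
  -- squares of off-diagonal entries
  have hβ₁sq : (Real.sqrt 2 * (ξ₁ - ξ₀)) ^ 2 = 3*(4+9*N)^2 / (32*(1+3*N+3*N^2)) := by
    rw [hdiff₁, mul_pow, div_pow, hs2, mul_pow, hsS2]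
    field_simp; ring
  have hβ₂sq : (Real.sqrt 2 * (ξ₂ - ξ₀)) ^ 2 = 3*(5+9*N)^2 / (32*(1+3*N+3*N^2)) := by
    rw [hdiff₂, mul_pow, div_pow, hs2, mul_pow, hsS2]
    field_simp; ring
  -- discriminants
  have hsum₁ : ((c₁ - (2*d₁ - b₁))/2)^2 + (Real.sqrt 2 * (ξ₁ - ξ₀))^2
      = (400 + 2976*N + 8640*N^2 + 11664*N^3 + 6561*N^4) / (16*(1+3*N+3*N^2))^2 := by
    rw [hβ₁sq, hc₁, hd₁, hb₁]; field_simp; ring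
  have hsum₂ : ((c₂ - (2*d₂ - b₂))/2)^2 + (Real.sqrt 2 * (ξ₂ - ξ₀))^2
      = (961 + 5556*N + 13014*N^2 + 14580*N^3 + 6561*N^4) / (16*(1+3*N+3*N^2))^2 := by
    rw [hβ₂sq, hc₂, hd₂, hb₂]; field_simp; ring
  have hsqrt₁ : Real.sqrt (((c₁ - (2*d₁ - b₁))/2)^2 + (Real.sqrt 2 * (ξ₁ - ξ₀))^2)
      = Real.sqrt (400 + 2976*N + 8640*N^2 + 11664*N^3 + 6561*N^4) / (16*(1+3*N+3*N^2)) := by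
    rw [hsum₁, Real.sqrt_div hP₁nn, Real.sqrt_sq (by positivity)]
  have hsqrt₂ : Real.sqrt (((c₂ - (2*d₂ - b₂))/2)^2 + (Real.sqrt 2 * (ξ₂ - ξ₀))^2)
      = Real.sqrt (961 + 5556*N + 13014*N^2 + 14580*N^3 + 6561*N^4) / (16*(1+3*N+3*N^2)) := by
    rw [hsum₂, Real.sqrt_div hP₂nn, Real.sqrt_sq (by positivity)]
  have hμ₁ : ν₁ = (c₁ + (2*d₁ - b₁))/2
      + Real.sqrt (((c₁ - (2*d₁ - b₁))/2)^2 + (Real.sqrt 2 * (ξ₁ - ξ₀))^2) := by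
    rw [hsqrt₁, hν₁, hc₁, hd₁, hb₁]; field_simp; ring
  have hμ₂ : ν₂ = (c₂ + (2*d₂ - b₂))/2
      + Real.sqrt (((c₂ - (2*d₂ - b₂))/2)^2 + (Real.sqrt 2 * (ξ₂ - ξ₀))^2) := by
    rw [hsqrt₂, hν₂, hc₂, hd₂, hb₂]; field_simp; ring
  refine ⟨aux_eig _ _ _ _ hβ₁pos.ne' hμ₁, aux_eig _ _ _ _ hβ₂pos.ne' hμ₂, ?_⟩
  have hsqlt : Real.sqrt (400 + 2976*N + 8640*N^2 + 11664*N^3 + 6561*N^4)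
      < Real.sqrt (961 + 5556*N + 13014*N^2 + 14580*N^3 + 6561*N^4) := by
    have hN0 : (0:ℝ) ≤ N := by linarith
    apply Real.sqrt_lt_sqrt hP₁nn
    linarith [pow_nonneg hN0 2, pow_nonneg hN0 3]
  rw [hν₁, hν₂]
  apply div_lt_div_of_pos_right (by linarith [hsqlt]) (by positivity)
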